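/- There is an absolute constant C > 0 such that for every weight w ∈ A₂^d and every dyadic interval J, (1/|J|) Σ_{I∈D(J)} ((m_{I⁺}w − m_{I⁻}w)/m_I w)² · |I| · m_I w⁻¹ ≤ C · ‖w‖_{A₂^d} · m_J w⁻¹. -/

import Mathlib

open MeasureTheory Set

noncomputable section

/-- The dyadic interval `[k 2^{-j}, (k+1) 2^{-j})`, indexed by `I = (j, k)`. -/
def dyadicI (I : ℤ × ℤ) : Set ℝ :=
  Set.Ico ((I.2 : ℝ) * 2 ^ (-I.1)) (((I.2 : ℝ) + 1) * 2 ^ (-I.1))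

/-- The length `|I| = 2^{-j}` of the dyadic interval indexed by `I = (j, k)`. -/
def len (I : ℤ × ℤ) : ℝ := 2 ^ (-I.1)

/-- The left half `I⁺` of the dyadic interval `I`. -/
def leftHalf (I : ℤ × ℤ) : ℤ × ℤ := (I.1 + 1, 2 * I.2)

/-- The right half `I⁻` of the dyadic interval `I`. -/
def rightHalf (I : ℤ × ℤ) : ℤ × ℤ := (I.1 + 1, 2 * I.2 + 1)

/-- The average `m_I f = (1/|I|) ∫_I f`. -/
def avg (f : ℝ → ℝ) (I : ℤ × ℤ) : ℝ := (len I)⁻¹ * ∫ x in dyadicI I, f x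

/-- The Haar function `h_I = |I|^{-1/2} (χ_{I⁺} - χ_{I⁻})`. -/
def haar (I : ℤ × ℤ) (x : ℝ) : ℝ :=
  (Real.sqrt (len I))⁻¹ *
    ((dyadicI (leftHalf I)).indicator (fun _ => (1 : ℝ)) x -
      (dyadicI (rightHalf I)).indicator (fun _ => (1 : ℝ)) x)

/-- The Haar coefficient `b_I = ⟨b, h_I⟩`. -/
def haarCoef (b : ℝ → ℝ) (I : ℤ × ℤ) : ℝ := ∫ x, b x * haar I x

/-- The dyadic BMO norm of `b`. -/
def bmoNorm (b : ℝ → ℝ) : ℝ :=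
  Real.sqrt (⨆ I : ℤ × ℤ, (len I)⁻¹ * ∫ x in dyadicI I, (b x - avg b I) ^ 2)

/-- The `A₂^d` characteristic `‖w‖_{A₂^d} = sup_I (m_I w)(m_I w⁻¹)`. -/
def A2const (w : ℝ → ℝ) : ℝ :=
  ⨆ I : ℤ × ℤ, avg w I * avg (fun x => (w x)⁻¹) I

namespace Prop3Aux

/-- Left endpoint. -/
def lo (I : ℤ × ℤ) : ℝ := (I.2 : ℝ) * 2 ^ (-I.1)

/-- Right endpoint. -/
def hi (I : ℤ × ℤ) : ℝ := ((I.2 : ℝ) + 1) * 2 ^ (-I.1)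

lemma two_zpow_pos (j : ℤ) : (0:ℝ) < 2 ^ j := zpow_pos two_pos j

lemma len_pos (I : ℤ × ℤ) : 0 < len I := two_zpow_pos _

lemma dyadicI_eq (I : ℤ × ℤ) : dyadicI I = Ico (lo I) (hi I) := rfl

lemma lo_lt_hi (I : ℤ × ℤ) : lo I < hi I := by
  have := two_zpow_pos (-I.1)
  unfold lo hi; nlinarith

lemma hi_sub_lo (I : ℤ × ℤ) : hi I - lo I = len I := by
  unfold lo hi len; ring

lemma zpow_neg_succ (j : ℤ) : (2:ℝ) ^ (-(j+1)) = 2 ^ (-j) / 2 := by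
  rw [neg_add, zpow_add₀ (two_ne_zero), zpow_neg_one]
  ring

lemma len_leftHalf (I : ℤ × ℤ) : len (leftHalf I) = len I / 2 := by
  simp only [len, leftHalf]
  exact zpow_neg_succ I.1

lemma len_rightHalf (I : ℤ × ℤ) : len (rightHalf I) = len I / 2 := by
  simp only [len, rightHalf]
  exact zpow_neg_succ I.1

lemma lo_leftHalf (I : ℤ × ℤ) : lo (leftHalf I) = lo I := by
  simp only [lo, leftHalf, zpow_neg_succ I.1]
  push_cast; ring

lemma hi_rightHalf (I : ℤ × ℤ) : hi (rightHalf I) = hi I := by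
  simp only [hi, rightHalf, zpow_neg_succ I.1]
  push_cast; ring

lemma hi_leftHalf_eq_lo_rightHalf (I : ℤ × ℤ) : hi (leftHalf I) = lo (rightHalf I) := by
  simp only [hi, lo, leftHalf, rightHalf]
  push_cast; ring

lemma lo_le_mid (I : ℤ × ℤ) : lo I ≤ hi (leftHalf I) := by
  rw [← lo_leftHalf I]
  exact (lo_lt_hi _).le

lemma mid_le_hi (I : ℤ × ℤ) : hi (leftHalf I) ≤ hi I := by
  rw [hi_leftHalf_eq_lo_rightHalf, ← hi_rightHalf I]
  exact (lo_lt_hi _).le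

lemma halves_union (I : ℤ × ℤ) :
    dyadicI (leftHalf I) ∪ dyadicI (rightHalf I) = dyadicI I := by
  rw [dyadicI_eq, dyadicI_eq, dyadicI_eq, lo_leftHalf, ← hi_leftHalf_eq_lo_rightHalf,
    hi_rightHalf]
  exact Ico_union_Ico_eq_Ico (lo_le_mid I) (mid_le_hi I)

lemma halves_disjoint (I : ℤ × ℤ) :
    Disjoint (dyadicI (leftHalf I)) (dyadicI (rightHalf I)) := by
  rw [dyadicI_eq, dyadicI_eq, ← hi_leftHalf_eq_lo_rightHalf]
  exact Set.Ico_disjoint_Ico_same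

lemma volume_dyadicI (I : ℤ × ℤ) : volume (dyadicI I) = ENNReal.ofReal (len I) := by
  rw [dyadicI_eq, Real.volume_Ico, hi_sub_lo]

lemma subset_iff (I K : ℤ × ℤ) :
    dyadicI I ⊆ dyadicI K ↔ lo K ≤ lo I ∧ hi I ≤ hi K := by
  rw [dyadicI_eq, dyadicI_eq]
  exact Ico_subset_Ico_iff (lo_lt_hi I)

lemma level_le_of_subset {I K : ℤ × ℤ} (h : dyadicI I ⊆ dyadicI K) : K.1 ≤ I.1 := by
  rw [subset_iff] at h
  have h1 : len I ≤ len K := by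
    have := hi_sub_lo I; have := hi_sub_lo K; linarith [h.1, h.2]
  have : (2:ℝ) ^ (-I.1) ≤ 2 ^ (-K.1) := h1
  have := (zpow_le_zpow_iff_right₀ (one_lt_two (α := ℝ))).1 this
  omega

lemma dyadicI_injective {I K : ℤ × ℤ} (h : dyadicI I = dyadicI K) : I = K := by
  have h1 : dyadicI I ⊆ dyadicI K := h.le
  have h2 : dyadicI K ⊆ dyadicI I := h.ge
  rw [subset_iff] at h1 h2
  have hlo : lo I = lo K := le_antisymm h2.1 h1.1
  have hhi : hi I = hi K := le_antisymm h1.2 h2.2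
  have hlen : len I = len K := by
    rw [← hi_sub_lo, ← hi_sub_lo, hlo, hhi]
  have hj : I.1 = K.1 := by
    have h3 : (2:ℝ) ^ (-I.1) = 2 ^ (-K.1) := hlen
    have := le_antisymm ((zpow_le_zpow_iff_right₀ (one_lt_two (α := ℝ))).1 h3.le)
      ((zpow_le_zpow_iff_right₀ (one_lt_two (α := ℝ))).1 h3.ge)
    omega
  have hk : I.2 = K.2 := by
    have h4 : (I.2 : ℝ) * 2 ^ (-I.1) = (K.2 : ℝ) * 2 ^ (-I.1) := by
      have h4' := hlo; simp only [lo] at h4'; rw [← hj] at h4'; exact h4'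
    have := mul_right_cancel₀ (ne_of_gt (two_zpow_pos (-I.1))) h4
    exact_mod_cast this
  exact Prod.ext hj hk

/-- Trichotomy: a dyadic subinterval of `K` is `K` itself or sits in one of its halves. -/
lemma trichotomy {I K : ℤ × ℤ} (h : dyadicI I ⊆ dyadicI K) :
    I = K ∨ dyadicI I ⊆ dyadicI (leftHalf K) ∨ dyadicI I ⊆ dyadicI (rightHalf K) := by
  by_cases hIK : I = K
  · exact Or.inl hIK
  right
  have hlev : K.1 ≤ I.1 := level_le_of_subset h
  rw [subset_iff] at h
  obtain ⟨hlo, hhi⟩ := h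
  set j := I.1 with hjdef
  set m := K.1 with hmdef
  -- rule out j = m
  have hjm : m + 1 ≤ j := by
    rcases lt_or_eq_of_le hlev with h' | h'
    · omega
    · exfalso
      apply hIK
      have e : (2:ℝ) ^ (-j) = 2 ^ (-m) := by rw [h']
      have h5 : (K.2 : ℝ) ≤ I.2 := by
        have := hlo
        simp only [Prop3Aux.lo] at this
        rw [← hjdef, ← hmdef, e] at this
        exact le_of_mul_le_mul_right this (two_zpow_pos (-m))
      have h6 : (I.2 : ℝ) + 1 ≤ (K.2 : ℝ) + 1 := by
        have := hhi
        simp only [Prop3Aux.hi] at this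
        rw [← hjdef, ← hmdef, e] at this
        exact le_of_mul_le_mul_right this (two_zpow_pos (-m))
      have : I.2 = K.2 := by
        have h5' : K.2 ≤ I.2 := by exact_mod_cast h5
        have h6' : I.2 ≤ K.2 := by
          have : (I.2 : ℝ) ≤ K.2 := by linarith
          exact_mod_cast this
        omega
      exact Prod.ext h'.symm this
  -- midpoint as an integer multiple of 2^(-j)
  set n : ℕ := (j - (m + 1)).toNat with hn
  have hnj : -(m + 1) = (n : ℤ) + (-j) := by omega
  set c : ℤ := (2 * K.2 + 1) * 2 ^ n with hc
  have hmid : hi (leftHalf K) = (c : ℝ) * 2 ^ (-j) := by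
    simp only [hi, leftHalf, hc]
    rw [← hmdef, hnj, zpow_add₀ (two_ne_zero)]
    push_cast
    simp only [zpow_natCast]
    ring
  by_cases hcase : hi I ≤ hi (leftHalf K)
  · left
    rw [subset_iff]
    exact ⟨by rw [lo_leftHalf]; exact hlo, hcase⟩
  · right
    rw [subset_iff, ← hi_leftHalf_eq_lo_rightHalf, hi_rightHalf]
    refine ⟨?_, hhi⟩
    push_neg at hcase
    rw [hmid] at hcase ⊢
    have e := two_zpow_pos (-j)
    have h7 : (c : ℝ) < (I.2 : ℝ) + 1 := by
      have := hcase
      simp only [hi] at this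
      rw [← hjdef] at this
      exact lt_of_mul_lt_mul_right this e.le
    have h8 : c ≤ I.2 := by
      have : (c : ℝ) < (I.2 : ℝ) + 1 := h7
      have : c < I.2 + 1 := by exact_mod_cast this
      omega
    have : (c : ℝ) ≤ I.2 := by exact_mod_cast h8
    simp only [lo, ← hjdef]
    exact mul_le_mul_of_nonneg_right this e.le

/-- The abstract Bellman-type summation over a dyadic tree. -/
lemma tree_sum (ψ term : ℤ × ℤ → ℝ) (hψ : ∀ I, 0 ≤ ψ I) (hterm0 : ∀ I, 0 ≤ term I)
    (hkey : ∀ I, term I ≤ ψ I - ψ (leftHalf I) - ψ (rightHalf I)) :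
    ∀ (d : ℕ) (K : ℤ × ℤ) (S : Finset (ℤ × ℤ)), (∀ I ∈ S, dyadicI I ⊆ dyadicI K) →
      (∀ I ∈ S, I.1 < K.1 + d) → ∑ I ∈ S, term I ≤ ψ K := by
  intro d
  induction d with
  | zero =>
    intro K S hsub hlev
    have : S = ∅ := by
      apply Finset.eq_empty_of_forall_notMem
      intro I hI
      have h1 := level_le_of_subset (hsub I hI)
      have h2 := hlev I hI
      omega
    rw [this, Finset.sum_empty]
    exact hψ K
  | succ d ih =>
    intro K S hsub hlev
    classical
    rw [← Finset.sum_filter_add_sum_filter_not S (fun I => I = K)]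
    set T := S.filter (fun I => ¬ I = K) with hT
    rw [← Finset.sum_filter_add_sum_filter_not T (fun I => dyadicI I ⊆ dyadicI (leftHalf K))]
    have hleft : ∑ I ∈ T.filter (fun I => dyadicI I ⊆ dyadicI (leftHalf K)), term I
        ≤ ψ (leftHalf K) := by
      apply ih
      · intro I hI
        exact (Finset.mem_filter.1 hI).2
      · intro I hI
        have hIS : I ∈ S := Finset.mem_filter.1 ((Finset.mem_filter.1 hI).1) |>.1
        have := hlev I hIS
        simp only [leftHalf]
        omega
    have hright : ∑ I ∈ T.filter (fun I => ¬ dyadicI I ⊆ dyadicI (leftHalf K)), term I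
        ≤ ψ (rightHalf K) := by
      apply ih
      · intro I hI
        obtain ⟨hIT, hnl⟩ := Finset.mem_filter.1 hI
        obtain ⟨hIS, hne⟩ := Finset.mem_filter.1 hIT
        rcases trichotomy (hsub I hIS) with h | h | h
        · exact absurd h hne
        · exact absurd h hnl
        · exact h
      · intro I hI
        have hIS : I ∈ S := Finset.mem_filter.1 ((Finset.mem_filter.1 hI).1) |>.1
        have := hlev I hIS
        simp only [rightHalf]
        omega
    have hdiag : ∑ I ∈ S.filter (fun I => I = K), term I
        ≤ ψ K - ψ (leftHalf K) - ψ (rightHalf K) := by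
      rw [Finset.filter_eq' S K]
      by_cases hK : K ∈ S
      · rw [if_pos hK, Finset.sum_singleton]
        exact hkey K
      · rw [if_neg hK, Finset.sum_empty]
        linarith [hterm0 K, hkey K]
    linarith

end Prop3Aux

open Prop3Aux

/-- Proposition 3: for `w ∈ A₂^d`,
`(1/|J|) Σ_{I∈D(J)} ((m_{I⁺}w − m_{I⁻}w)/m_I w)² |I| m_I w⁻¹ ≤ C ‖w‖_{A₂^d} m_J w⁻¹`. -/
theorem prop_sum2
    : ∃ C : ℝ, 0 < C ∧ ∀ (w : ℝ → ℝ), (∀ x, 0 < w x) →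
      LocallyIntegrable w volume →
      LocallyIntegrable (fun x => (w x)⁻¹) volume →
      BddAbove (Set.range fun I : ℤ × ℤ => avg w I * avg (fun x => (w x)⁻¹) I) →
      ∀ (J : ℤ × ℤ) (S : Finset (ℤ × ℤ)), (∀ I ∈ S, dyadicI I ⊆ dyadicI J) →
        (len J)⁻¹ * ∑ I ∈ S,
            ((avg w (leftHalf I) - avg w (rightHalf I)) / avg w I) ^ 2 * len I *
              avg (fun x => (w x)⁻¹) I
          ≤ C * A2const w * avg (fun x => (w x)⁻¹) J := by
  refine ⟨4, by norm_num, ?_⟩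
  intro w hwpos hwloc hvloc hbdd J S hsub
  set v : ℝ → ℝ := fun x => (w x)⁻¹ with hv
  set Q : ℝ := A2const w with hQ
  -- basic integrability
  have hInt : ∀ (f : ℝ → ℝ), LocallyIntegrable f volume → ∀ I : ℤ × ℤ,
      IntegrableOn f (dyadicI I) volume := by
    intro f hf I
    have : IntegrableOn f (Icc (lo I) (hi I)) volume :=
      hf.integrableOn_isCompact isCompact_Icc
    exact this.mono_set (by rw [dyadicI_eq]; exact Ico_subset_Icc_self)
  have hIw := hInt w hwloc
  have hIv := hInt v hvloc
  -- positivity of averages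
  have havg_pos : ∀ (f : ℝ → ℝ), (∀ x, 0 < f x) → (∀ I, IntegrableOn f (dyadicI I) volume) →
      ∀ I, 0 < avg f I := by
    intro f hf hfi I
    have hpos : 0 < ∫ x in dyadicI I, f x := by
      rw [setIntegral_pos_iff_support_of_nonneg_ae
        (Filter.Eventually.of_forall fun x => (hf x).le) (hfi I)]
      have : Function.support f ∩ dyadicI I = dyadicI I := by
        apply inter_eq_self_of_subset_right
        intro x _
        exact (hf x).ne'
      rw [this, volume_dyadicI]
      simp [ENNReal.ofReal_pos, len_pos I]
    exact mul_pos (inv_pos.2 (len_pos I)) hpos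
  have hu_pos : ∀ I, 0 < avg w I := havg_pos w hwpos hIw
  have hv_pos : ∀ I, 0 < avg v I := havg_pos v (fun x => inv_pos.2 (hwpos x)) hIv
  -- the A₂ bound
  have hA2 : ∀ I, avg w I * avg v I ≤ Q := by
    intro I
    exact le_ciSup hbdd I
  -- integral split across halves
  have hsplit : ∀ (f : ℝ → ℝ), (∀ I, IntegrableOn f (dyadicI I) volume) → ∀ I,
      avg f I = (avg f (leftHalf I) + avg f (rightHalf I)) / 2 := by
    intro f hfi I
    have hIl : IntegrableOn f (dyadicI (leftHalf I)) volume :=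
      (hfi I).mono_set (by rw [← halves_union I]; exact subset_union_left)
    have hIr : IntegrableOn f (dyadicI (rightHalf I)) volume :=
      (hfi I).mono_set (by rw [← halves_union I]; exact subset_union_right)
    have hint : ∫ x in dyadicI I, f x
        = (∫ x in dyadicI (leftHalf I), f x) + ∫ x in dyadicI (rightHalf I), f x := by
      rw [← halves_union I, setIntegral_union (halves_disjoint I)
        (by rw [dyadicI_eq]; exact measurableSet_Ico) hIl hIr]
    simp only [avg, hint, len_leftHalf, len_rightHalf]
    have := len_pos I
    field_simp
  -- Cauchy–Schwarz: 1 ≤ m_I w ⋅ m_I v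
  have hCS : ∀ I, 1 ≤ avg w I * avg v I := by
    intro I
    set u := avg w I with hu
    have hupos := hu_pos I
    have hL := len_pos I
    have hmono : ∫ x in dyadicI I, (2 * u) ≤ ∫ x in dyadicI I, (w x + u ^ 2 * v x) := by
      apply setIntegral_mono_on
      · exact (integrableOn_const (by rw [volume_dyadicI]; exact ENNReal.ofReal_ne_top))
      · exact (hIw I).add (((hIv I).const_mul (u ^ 2)))
      · rw [dyadicI_eq]; exact measurableSet_Ico
      · intro x _
        have hwx := hwpos x
        have hvx : v x = (w x)⁻¹ := rfl
        rw [hvx, ← sub_nonneg]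
        have heq : w x + u ^ 2 * (w x)⁻¹ - 2 * u = (w x - u) ^ 2 / w x := by
          field_simp
          ring
        rw [heq]
        positivity
    have hconst : ∫ x in dyadicI I, (2 * u) = len I * (2 * u) := by
      rw [setIntegral_const, measureReal_def, volume_dyadicI, ENNReal.toReal_ofReal hL.le, smul_eq_mul]
    have hsum : ∫ x in dyadicI I, (w x + u ^ 2 * v x)
        = (∫ x in dyadicI I, w x) + u ^ 2 * ∫ x in dyadicI I, v x := by
      rw [integral_add (hIw I) ((hIv I).const_mul (u ^ 2)), integral_const_mul]
    have hiw : ∫ x in dyadicI I, w x = len I * u := by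
      rw [hu]; unfold avg; field_simp
    have hivv : ∫ x in dyadicI I, v x = len I * avg v I := by
      unfold avg; field_simp
    rw [hconst, hsum, hiw, hivv] at hmono
    have h2 : len I * u ≤ u ^ 2 * (len I * avg v I) := by nlinarith
    have h3 : u ≤ u ^ 2 * avg v I := by
      have := mul_le_mul_of_nonneg_left h2 (le_of_lt (inv_pos.2 hL))
      calc u = (len I)⁻¹ * (len I * u) := by field_simp
        _ ≤ (len I)⁻¹ * (u ^ 2 * (len I * avg v I)) := this
        _ = u ^ 2 * avg v I := by field_simp
    nlinarith [hu_pos I]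
  have hQ1 : (1:ℝ) ≤ Q := le_trans (hCS J) (hA2 J)
  -- the Bellman function
  set ψ : ℤ × ℤ → ℝ := fun I => 4 * Q * len I * (avg v I - (avg w I)⁻¹) with hψdef
  set term : ℤ × ℤ → ℝ := fun I =>
    ((avg w (leftHalf I) - avg w (rightHalf I)) / avg w I) ^ 2 * len I * avg v I with htermdef
  have hψ0 : ∀ I, 0 ≤ ψ I := by
    intro I
    have h1 := hCS I
    have h2 := hu_pos I
    have h3 : (avg w I)⁻¹ ≤ avg v I := by
      rw [inv_le_iff_one_le_mul₀ h2]
      linarith [hCS I]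
    have := len_pos I
    have : 0 ≤ avg v I - (avg w I)⁻¹ := by linarith
    positivity
  have hterm0 : ∀ I, 0 ≤ term I := by
    intro I
    have := len_pos I
    have := hv_pos I
    positivity
  have hkey : ∀ I, term I ≤ ψ I - ψ (leftHalf I) - ψ (rightHalf I) := by
    intro I
    set a := avg w (leftHalf I) with ha
    set b := avg w (rightHalf I) with hb
    set p := avg v (leftHalf I) with hp
    set q := avg v (rightHalf I) with hq
    have hap : 0 < a := hu_pos _
    have hbp : 0 < b := hu_pos _
    have hpp : 0 < p := hv_pos _
    have hqp : 0 < q := hv_pos _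
    have haq : a * p ≤ Q := hA2 _
    have hbq : b * q ≤ Q := hA2 _
    have hwsplit := hsplit w hIw I
    have hvsplit := hsplit v hIv I
    have hL := len_pos I
    rw [htermdef, hψdef]
    simp only
    rw [hwsplit, hvsplit, len_leftHalf, len_rightHalf, ← ha, ← hb, ← hp, ← hq]
    have hab : 0 < a + b := by linarith
    -- RHS equals 2 Q len (a-b)^2 / (a b (a+b))
    have hRHS : 4 * Q * len I * ((p + q) / 2 - ((a + b) / 2)⁻¹)
        - 4 * Q * (len I / 2) * (p - a⁻¹) - 4 * Q * (len I / 2) * (q - b⁻¹)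
        = 2 * Q * len I * (a - b) ^ 2 / (a * b * (a + b)) := by
      field_simp
      ring
    have hLHS : ((a - b) / ((a + b) / 2)) ^ 2 * len I * ((p + q) / 2)
        = 2 * len I * (a - b) ^ 2 * (p + q) / (a + b) ^ 2 := by
      field_simp
    rw [hRHS, hLHS]
    rw [div_le_div_iff₀ (by positivity) (by positivity)]
    have h1 : p * (a * b) ≤ Q * b := by
      calc p * (a * b) = (a * p) * b := by ring
        _ ≤ Q * b := mul_le_mul_of_nonneg_right haq hbp.le
    have h2 : q * (a * b) ≤ Q * a := by
      calc q * (a * b) = (b * q) * a := by ring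
        _ ≤ Q * a := mul_le_mul_of_nonneg_right hbq hap.le
    have h3 : (p + q) * (a * b) ≤ Q * (a + b) := by
      calc (p + q) * (a * b) = p * (a * b) + q * (a * b) := by ring
        _ ≤ Q * b + Q * a := add_le_add h1 h2
        _ = Q * (a + b) := by ring
    calc 2 * len I * (a - b) ^ 2 * (p + q) * (a * b * (a + b))
        = 2 * len I * (a - b) ^ 2 * (a + b) * ((p + q) * (a * b)) := by ring
      _ ≤ 2 * len I * (a - b) ^ 2 * (a + b) * (Q * (a + b)) := by
          apply mul_le_mul_of_nonneg_left h3 (by positivity)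
      _ = 2 * Q * len I * (a - b) ^ 2 * (a + b) ^ 2 := by ring
  -- apply the tree lemma
  have htree := tree_sum ψ term hψ0 hterm0 hkey
  set d : ℕ := (S.sup fun I => (I.1 - J.1).toNat) + 1 with hd
  have hlev : ∀ I ∈ S, I.1 < J.1 + d := by
    intro I hI
    have h1 : (I.1 - J.1).toNat ≤ S.sup fun I => (I.1 - J.1).toNat :=
      Finset.le_sup (f := fun I => (I.1 - J.1).toNat) hI
    omega
  have hmain : ∑ I ∈ S, term I ≤ ψ J := htree d J S hsub hlev
  have hLJ := len_pos J
  have huJ := hu_pos J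
  have hvJ := hv_pos J
  calc (len J)⁻¹ * ∑ I ∈ S,
        ((avg w (leftHalf I) - avg w (rightHalf I)) / avg w I) ^ 2 * len I * avg v I
      ≤ (len J)⁻¹ * ψ J := by
        apply mul_le_mul_of_nonneg_left _ (inv_pos.2 hLJ).le
        exact hmain
    _ = 4 * Q * (avg v J - (avg w J)⁻¹) := by
        rw [hψdef]; field_simp
    _ ≤ 4 * Q * avg v J := by
        have hQpos : 0 < Q := by linarith
        have : 0 < (avg w J)⁻¹ := inv_pos.2 huJ
        nlinarith
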